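/- For every tree T, the pruning number equals the deduction number: p(T) = d(T). -/

import Mathlib

open Finset in
/-- One stage of the deduction game.  The state is a pair `(P, F)` where `P` is the set of
protected vertices and `F` is the set of vertices whose initial searchers have already fired
(moved).  A vertex `v` is fireable if it is occupied, has not yet fired, and the number of
searchers on it (in the initial layout `L`) is at least its number of unprotected neighbours.
All fireable vertices fire simultaneously: one searcher moves to each unprotected neighbour,
which thereby becomes protected. -/
def dedStep {V : Type*} [Fintype V] [DecidableEq V] (G : SimpleGraph V) [DecidableRel G.Adj]
    (L : V → ℕ) (s : Finset V × Finset V) : Finset V × Finset V :=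
  let fire : Finset V := univ.filter (fun v =>
    0 < L v ∧ v ∉ s.2 ∧ (univ.filter (fun u => G.Adj v u ∧ u ∉ s.1)).card ≤ L v)
  (s.1 ∪ fire.biUnion (fun v => univ.filter (fun u => G.Adj v u ∧ u ∉ s.1)), s.2 ∪ fire)

open Finset in
/-- A layout `L` (assigning a number of searchers to each vertex) is successful if, starting
from the initially occupied vertices being protected and no vertex having fired, iterating the
deduction stages eventually protects every vertex. -/
def DedSuccessful {V : Type*} [Fintype V] [DecidableEq V] (G : SimpleGraph V)
    [DecidableRel G.Adj] (L : V → ℕ) : Prop :=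
  ∃ k : ℕ, ((dedStep G L)^[k] (univ.filter (fun v => 0 < L v), ∅)).1 = univ

/-- The deduction number of `G`: the minimum number of searchers in a successful layout. -/
noncomputable def deductionNumber {V : Type*} [Fintype V] (G : SimpleGraph V) : ℕ :=
  letI := Classical.decEq V
  letI := Classical.decRel G.Adj
  sInf {n | ∃ L : V → ℕ, (∑ v, L v) = n ∧ DedSuccessful G L}

open Classical in
/-- The number of searchers placed by one round of the pruning algorithm on the induced
subgraph of `G` on `S`: one searcher for each connected component with at most two
vertices, and one searcher on each leaf of every larger component. -/
noncomputable def pruneStepCount {V : Type*} [Fintype V] (G : SimpleGraph V)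
    (S : Finset V) : ℕ :=
  letI : Fintype (G.induce (S : Set V)).ConnectedComponent := Fintype.ofFinite _
  ∑ c : (G.induce (S : Set V)).ConnectedComponent,
    if c.supp.ncard ≤ 2 then 1
    else {v ∈ c.supp | {u | (G.induce (S : Set V)).Adj v u}.ncard = 1}.ncard

open Classical in
/-- The vertices deleted by one round of the pruning algorithm on the induced subgraph of
`G` on `S`: isolated vertices and leaves (degree at most one) together with stems
(vertices adjacent to a leaf). -/
noncomputable def pruneRemoved {V : Type*} [Fintype V] (G : SimpleGraph V)
    (S : Finset V) : Finset V :=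
  S.filter (fun v => {u ∈ (S : Set V) | G.Adj v u}.ncard ≤ 1 ∨
    ∃ u ∈ S, G.Adj v u ∧ {w ∈ (S : Set V) | G.Adj u w}.ncard = 1)

/-- Running the pruning algorithm for a given number of rounds. -/
noncomputable def pruneRun {V : Type*} [Fintype V] [DecidableEq V] (G : SimpleGraph V) :
    ℕ → Finset V → ℕ
  | 0, _ => 0
  | fuel + 1, S =>
    if S = ∅ then 0 else pruneStepCount G S + pruneRun G fuel (S \ pruneRemoved G S)

/-- The pruning number of `G`: the total number of searchers placed by the pruning
algorithm.  (On a tree, each round deletes at least one vertex, so `Fintype.card V`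
rounds always suffice for the algorithm to terminate.) -/
noncomputable def pruningNumber {V : Type*} [Fintype V] [DecidableEq V]
    (G : SimpleGraph V) : ℕ :=
  pruneRun G (Fintype.card V) Finset.univ



open Finset

namespace DedGame

variable {V : Type*} [Fintype V] [DecidableEq V] (G : SimpleGraph V)

set_option linter.unusedSectionVars false

open Classical in
/-- unprotected neighbours of `v` within `S`, given protected set `P`. -/
noncomputable def nbrS (S P : Finset V) (v : V) : Finset V :=
  S.filter (fun u => G.Adj v u ∧ u ∉ P)

open Classical in
noncomputable def relStep (S : Finset V) (L : V → ℕ) (s : Finset V × Finset V) :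
    Finset V × Finset V :=
  let fire := S.filter (fun v => 0 < L v ∧ v ∉ s.2 ∧ (nbrS G S s.1 v).card ≤ L v)
  (s.1 ∪ fire.biUnion (nbrS G S s.1), s.2 ∪ fire)

open Classical in
noncomputable def initSt (S : Finset V) (L : V → ℕ) : Finset V × Finset V :=
  (S.filter (fun v => 0 < L v), ∅)

noncomputable def run (S : Finset V) (L : V → ℕ) (k : ℕ) : Finset V × Finset V :=
  (relStep G S L)^[k] (initSt S L)

def RelSucc (S : Finset V) (L : V → ℕ) : Prop :=
  ∃ k, S ⊆ (run G S L k).1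

noncomputable def relDed (S : Finset V) : ℕ :=
  sInf {n | ∃ L : V → ℕ, (∀ v ∉ S, L v = 0) ∧ (∑ v ∈ S, L v) = n ∧ RelSucc G S L}

open Classical in
lemma mem_nbrS {S P : Finset V} {v u : V} :
    u ∈ nbrS G S P v ↔ u ∈ S ∧ G.Adj v u ∧ u ∉ P := by
  simp [nbrS]

lemma run_succ (S : Finset V) (L : V → ℕ) (k : ℕ) :
    run G S L (k+1) = relStep G S L (run G S L k) := by
  simp [run, Function.iterate_succ_apply']

open Classical in
lemma fst_relStep (S : Finset V) (L : V → ℕ) (s : Finset V × Finset V) :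
    (relStep G S L s).1 = s.1 ∪ (S.filter (fun v => 0 < L v ∧ v ∉ s.2 ∧
      (nbrS G S s.1 v).card ≤ L v)).biUnion (nbrS G S s.1) := rfl

open Classical in
lemma snd_relStep (S : Finset V) (L : V → ℕ) (s : Finset V × Finset V) :
    (relStep G S L s).2 = s.2 ∪ S.filter (fun v => 0 < L v ∧ v ∉ s.2 ∧
      (nbrS G S s.1 v).card ≤ L v) := rfl

lemma subset_fst_relStep (S : Finset V) (L : V → ℕ) (s : Finset V × Finset V) :
    s.1 ⊆ (relStep G S L s).1 := by
  rw [fst_relStep]; exact subset_union_left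

lemma subset_snd_relStep (S : Finset V) (L : V → ℕ) (s : Finset V × Finset V) :
    s.2 ⊆ (relStep G S L s).2 := by
  rw [snd_relStep]; exact subset_union_left

lemma run_fst_mono (S : Finset V) (L : V → ℕ) {k l : ℕ} (h : k ≤ l) :
    (run G S L k).1 ⊆ (run G S L l).1 := by
  induction l with
  | zero => simp_all
  | succ n ih =>
    rcases Nat.lt_or_ge k (n+1) with h' | h'
    · exact (ih (Nat.lt_succ_iff.mp h')).trans (by rw [run_succ]; exact subset_fst_relStep ..)
    · have : k = n+1 := le_antisymm h h'
      subst this; rfl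

lemma run_snd_mono (S : Finset V) (L : V → ℕ) {k l : ℕ} (h : k ≤ l) :
    (run G S L k).2 ⊆ (run G S L l).2 := by
  induction l with
  | zero => simp_all
  | succ n ih =>
    rcases Nat.lt_or_ge k (n+1) with h' | h'
    · exact (ih (Nat.lt_succ_iff.mp h')).trans (by rw [run_succ]; exact subset_snd_relStep ..)
    · have : k = n+1 := le_antisymm h h'
      subst this; rfl

/-- The protected set stays inside `S`, fired set inside `S`, and every fired vertex has all
its `S`-neighbours protected. -/
def GoodSt (S : Finset V) (s : Finset V × Finset V) : Prop :=
  s.1 ⊆ S ∧ s.2 ⊆ S ∧ ∀ v ∈ s.2, nbrS G S s.1 v = ∅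

open Classical in
lemma goodSt_relStep {S : Finset V} {L : V → ℕ} {s : Finset V × Finset V}
    (h : GoodSt G S s) : GoodSt G S (relStep G S L s) := by
  obtain ⟨h1, h2, h3⟩ := h
  refine ⟨?_, ?_, ?_⟩
  · rw [fst_relStep]
    refine union_subset h1 ?_
    intro u hu
    rcases mem_biUnion.mp hu with ⟨v, _, hv⟩
    exact ((mem_nbrS G).mp hv).1
  · rw [snd_relStep]
    exact union_subset h2 (filter_subset _ _)
  · intro v hv
    rw [snd_relStep] at hv
    rw [eq_empty_iff_forall_notMem]
    intro u hu
    rw [mem_nbrS] at hu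
    have hP : (relStep G S L s).1 = s.1 ∪ _ := fst_relStep G S L s
    rcases mem_union.mp hv with hv | hv
    · have hemp := h3 v hv
      have : u ∈ nbrS G S s.1 v := (mem_nbrS G).mpr
        ⟨hu.1, hu.2.1, fun hc => hu.2.2 (subset_fst_relStep G S L s hc)⟩
      rw [hemp] at this
      exact notMem_empty u this
    · -- v fired this step: all its unprotected nbrs were added
      have : u ∈ nbrS G S s.1 v ∨ u ∈ s.1 := by
        by_cases hus : u ∈ s.1
        · exact Or.inr hus
        · exact Or.inl ((mem_nbrS G).mpr ⟨hu.1, hu.2.1, hus⟩)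
      rcases this with h' | h'
      · exact hu.2.2 (by rw [fst_relStep]; exact mem_union_right _ (mem_biUnion.mpr ⟨v, hv, h'⟩))
      · exact hu.2.2 (subset_fst_relStep G S L s h')

open Classical in
lemma goodSt_init (S : Finset V) (L : V → ℕ) : GoodSt G S (initSt S L) := by
  refine ⟨filter_subset _ _, by simp [initSt], by simp [initSt]⟩

lemma goodSt_run (S : Finset V) (L : V → ℕ) (k : ℕ) : GoodSt G S (run G S L k) := by
  induction k with
  | zero => exact goodSt_init G S L
  | succ n ih => rw [run_succ]; exact goodSt_relStep G ih

open Classical in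
lemma cause_of_protect {S : Finset V} {L : V → ℕ} {k : ℕ} {u : V}
    (h : u ∈ (run G S L k).1) :
    u ∈ (initSt S L).1 ∨ ∃ w ∈ (run G S L k).2, G.Adj w u := by
  induction k with
  | zero => exact Or.inl h
  | succ n ih =>
    rw [run_succ, fst_relStep] at h
    rcases mem_union.mp h with h | h
    · rcases ih h with h' | ⟨w, hw, hadj⟩
      · exact Or.inl h'
      · exact Or.inr ⟨w, run_snd_mono G S L (Nat.le_succ n) hw, hadj⟩
    · rcases mem_biUnion.mp h with ⟨w, hw, hu⟩
      refine Or.inr ⟨w, ?_, ((mem_nbrS G).mp hu).2.1⟩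
      rw [run_succ, snd_relStep]
      exact mem_union_right _ hw

open Classical in
/-- the set of vertices that fire at step `k` (between state `k` and `k+1`). -/
noncomputable def fireSet (S : Finset V) (L : V → ℕ) (k : ℕ) : Finset V :=
  S.filter (fun v => 0 < L v ∧ v ∉ (run G S L k).2 ∧
    (nbrS G S (run G S L k).1 v).card ≤ L v)

lemma snd_run_succ (S : Finset V) (L : V → ℕ) (k : ℕ) :
    (run G S L (k+1)).2 = (run G S L k).2 ∪ fireSet G S L k := by
  rw [run_succ, snd_relStep]; rfl

lemma fst_run_succ (S : Finset V) (L : V → ℕ) (k : ℕ) :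
    (run G S L (k+1)).1 = (run G S L k).1 ∪
      (fireSet G S L k).biUnion (nbrS G S (run G S L k).1) := by
  rw [run_succ, fst_relStep]; rfl

open Classical in
lemma mem_fireSet {S : Finset V} {L : V → ℕ} {k : ℕ} {w : V} :
    w ∈ fireSet G S L k ↔ w ∈ S ∧ 0 < L w ∧ w ∉ (run G S L k).2 ∧
      (nbrS G S (run G S L k).1 w).card ≤ L w := by
  simp [fireSet]

lemma fireSet_subset_snd (S : Finset V) (L : V → ℕ) (k : ℕ) :
    fireSet G S L k ⊆ (run G S L (k+1)).2 := by
  rw [snd_run_succ]; exact subset_union_right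

lemma fire_effect {S : Finset V} {L : V → ℕ} {k : ℕ} {w : V}
    (hw : w ∈ fireSet G S L k) :
    nbrS G S (run G S L k).1 w ⊆ (run G S L (k+1)).1 := by
  rw [fst_run_succ]
  exact fun u hu => mem_union_right _ (mem_biUnion.mpr ⟨w, hw, hu⟩)

lemma fireSet_unique {S : Finset V} {L : V → ℕ} {k l : ℕ} {w : V}
    (hk : w ∈ fireSet G S L k) (hl : w ∈ fireSet G S L l) : k = l := by
  by_contra hne
  rcases Nat.lt_or_ge k l with h | h
  · exact ((mem_fireSet G).mp hl).2.2.1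
      (run_snd_mono G S L h (fireSet_subset_snd G S L k hk))
  · have h' : l < k := lt_of_le_of_ne h (fun e => hne e.symm)
    exact ((mem_fireSet G).mp hk).2.2.1
      (run_snd_mono G S L h' (fireSet_subset_snd G S L l hl))

lemma mem_snd_iff_fireSet {S : Finset V} {L : V → ℕ} {k : ℕ} {w : V} :
    w ∈ (run G S L k).2 ↔ ∃ t < k, w ∈ fireSet G S L t := by
  induction k with
  | zero => simp [run, initSt]
  | succ n ih =>
    rw [snd_run_succ, mem_union, ih]
    constructor
    · rintro (⟨t, ht, hw⟩ | hw)
      · exact ⟨t, ht.trans (Nat.lt_succ_self n), hw⟩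
      · exact ⟨n, Nat.lt_succ_self n, hw⟩
    · rintro ⟨t, ht, hw⟩
      rcases Nat.lt_or_ge t n with h | h
      · exact Or.inl ⟨t, h, hw⟩
      · have : t = n := le_antisymm (Nat.lt_succ_iff.mp ht) h
        subst this; exact Or.inr hw

lemma mem_init_fst {S : Finset V} {L : V → ℕ} {v : V} :
    v ∈ (initSt S L : Finset V × Finset V).1 ↔ v ∈ S ∧ 0 < L v := by
  classical
  simp [initSt]

lemma run_zero (S : Finset V) (L : V → ℕ) : run G S L 0 = initSt S L := rfl

open Classical in
lemma nbrS_anti {S P Q : Finset V} (h : P ⊆ Q) (v : V) :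
    nbrS G S Q v ⊆ nbrS G S P v := by
  intro u hu
  rw [mem_nbrS] at hu ⊢
  exact ⟨hu.1, hu.2.1, fun hc => hu.2.2 (h hc)⟩

lemma iter_fst_mono (S : Finset V) (L : V → ℕ) (τ : Finset V × Finset V) {k l : ℕ}
    (h : k ≤ l) :
    ((relStep G S L)^[k] τ).1 ⊆ ((relStep G S L)^[l] τ).1 := by
  induction l with
  | zero => simp_all
  | succ n ih =>
    rcases Nat.lt_or_ge k (n+1) with h' | h'
    · refine (ih (Nat.lt_succ_iff.mp h')).trans ?_
      rw [Function.iterate_succ_apply']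
      exact subset_fst_relStep ..
    · have : k = n+1 := le_antisymm h h'
      subst this; rfl

lemma goodSt_iter {S : Finset V} {L : V → ℕ} {τ : Finset V × Finset V}
    (h : GoodSt G S τ) (k : ℕ) : GoodSt G S ((relStep G S L)^[k] τ) := by
  induction k with
  | zero => exact h
  | succ n ih => rw [Function.iterate_succ_apply']; exact goodSt_relStep G ih

open Classical in
/-- The master simulation lemma: if game 2 (active set `S₂`, layout `L₂`, started from a
good state `τ₀`) dominates game 1 (`S₁`, `L₁`, standard start) in the sense of the four
hypotheses, then at every step everything protected in game 1 inside `S₂` is protected in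
game 2. -/
lemma sim {S₁ S₂ : Finset V} {L₁ L₂ : V → ℕ} {τ₀ : Finset V × Finset V}
    (hgood : GoodSt G S₂ τ₀)
    (hinit : ∀ v ∈ S₁, v ∈ S₂ → 0 < L₁ v → v ∈ τ₀.1)
    (hL : ∀ v ∈ S₁, v ∈ S₂ → L₁ v ≤ L₂ v)
    (hext : ∀ v ∈ S₁, v ∈ S₂ → ∀ u ∈ S₂, G.Adj v u → u ∉ S₁ → u ∈ τ₀.1)
    (hcross : ∀ k, ∀ w ∈ fireSet G S₁ L₁ k, w ∉ S₂ → ∀ u ∈ S₂, G.Adj w u →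
      u ∉ (run G S₁ L₁ k).1 → u ∈ τ₀.1) :
    ∀ k, (run G S₁ L₁ k).1 ∩ S₂ ⊆ ((relStep G S₂ L₂)^[k] τ₀).1 := by
  set σ := run G S₁ L₁ with hσ
  set τ := fun k => (relStep G S₂ L₂)^[k] τ₀ with hτ
  have hτsucc : ∀ k, τ (k+1) = relStep G S₂ L₂ (τ k) := by
    intro k; simp [hτ, Function.iterate_succ_apply']
  have hτmono : ∀ k, τ₀.1 ⊆ (τ k).1 := fun k =>
    iter_fst_mono G S₂ L₂ τ₀ (Nat.zero_le k)
  have hτstep : ∀ k, (τ k).1 ⊆ (τ (k+1)).1 := by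
    intro k; rw [hτsucc]; exact subset_fst_relStep ..
  have hτgood : ∀ k, GoodSt G S₂ (τ k) := fun k => goodSt_iter G hgood k
  -- the strengthened invariant
  suffices H : ∀ k, (σ k).1 ∩ S₂ ⊆ (τ k).1 ∧
      (∀ v ∈ (σ k).2, v ∈ S₂ → v ∈ (τ k).2 ∨ nbrS G S₂ (τ k).1 v = ∅) by
    exact fun k => (H k).1
  intro k
  induction k with
  | zero =>
    constructor
    · intro v hv
      rw [mem_inter] at hv
      have := mem_init_fst.mp (show v ∈ (initSt S₁ L₁).1 from hv.1)
      exact hinit v this.1 hv.2 this.2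
    · intro v hv
      simp [hσ, run, initSt] at hv
  | succ n ih =>
    obtain ⟨ihP, ihF⟩ := ih
    -- key: a vertex of S₂ firing in game 1 at step n is handled in game 2
    have key : ∀ w ∈ fireSet G S₁ L₁ n, w ∈ S₂ →
        (w ∈ (τ (n+1)).2 ∨ nbrS G S₂ (τ (n+1)).1 w = ∅) ∧
        (∀ u ∈ S₂, G.Adj w u → u ∈ (τ (n+1)).1 ∨ u ∈ (σ n).1) := by
      intro w hw hw2
      have hwf := (mem_fireSet G).mp hw
      by_cases hclosed : nbrS G S₂ (τ n).1 w = ∅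
      · constructor
        · right
          rw [eq_empty_iff_forall_notMem] at hclosed ⊢
          exact fun u hu => hclosed u (nbrS_anti G (hτstep n) w hu)
        · intro u hu hadj
          by_cases hP : u ∈ (τ n).1
          · exact Or.inl (hτstep n hP)
          · exact absurd ((mem_nbrS G).mpr ⟨hu, hadj, hP⟩) (by rw [hclosed]; simp)
      by_cases hfired : w ∈ (τ n).2
      · exact absurd ((hτgood n).2.2 w hfired) hclosed
      -- w fires in game 2 at step n
      have hsub : nbrS G S₂ (τ n).1 w ⊆ nbrS G S₁ (σ n).1 w := by
        intro u hu
        rw [mem_nbrS] at hu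
        by_cases hu1 : u ∈ S₁
        · refine (mem_nbrS G).mpr ⟨hu1, hu.2.1, fun hc => hu.2.2 (ihP (mem_inter.mpr ⟨hc, hu.1⟩))⟩
        · exact absurd (hτmono n (hext w hwf.1 hw2 u hu.1 hu.2.1 hu1)) hu.2.2
      have hfire2 : w ∈ S₂.filter (fun v => 0 < L₂ v ∧ v ∉ (τ n).2 ∧
          (nbrS G S₂ (τ n).1 v).card ≤ L₂ v) := by
        rw [mem_filter]
        exact ⟨hw2, lt_of_lt_of_le hwf.2.1 (hL w hwf.1 hw2), hfired,
          le_trans (le_trans (card_le_card hsub) hwf.2.2.2) (hL w hwf.1 hw2)⟩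
      constructor
      · left
        rw [hτsucc, snd_relStep]
        exact mem_union_right _ hfire2
      · intro u hu hadj
        by_cases hP : u ∈ (τ n).1
        · exact Or.inl (hτstep n hP)
        · left
          rw [hτsucc, fst_relStep]
          exact mem_union_right _ (mem_biUnion.mpr
            ⟨w, hfire2, (mem_nbrS G).mpr ⟨hu, hadj, hP⟩⟩)
    constructor
    · intro x hx
      rw [mem_inter] at hx
      obtain ⟨hx1, hx2⟩ := hx
      rw [hσ] at hx1
      rw [fst_run_succ] at hx1
      rcases mem_union.mp hx1 with h | h
      · exact hτstep n (ihP (mem_inter.mpr ⟨h, hx2⟩))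
      · rcases mem_biUnion.mp h with ⟨w, hw, hxw⟩
        rw [mem_nbrS] at hxw
        by_cases hw2 : w ∈ S₂
        · rcases (key w hw hw2).2 x hx2 hxw.2.1 with h' | h'
          · exact h'
          · exact absurd h' hxw.2.2
        · exact hτmono (n+1) (hcross n w hw hw2 x hx2 hxw.2.1 hxw.2.2)
    · intro v hv hv2
      rw [hσ, snd_run_succ] at hv
      rcases mem_union.mp hv with h | h
      · rcases ihF v h hv2 with h' | h'
        · left
          rw [hτsucc, snd_relStep]
          exact mem_union_left _ h'
        · right
          rw [eq_empty_iff_forall_notMem] at h' ⊢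
          exact fun u hu => h' u (nbrS_anti G (hτstep n) v hu)
      · exact (key v h hv2).1

section Leaf

open SimpleGraph

/-- Every nonempty finite acyclic graph has a vertex of degree at most one. -/
lemma exists_leaf_of_acyclic {W : Type*} [Fintype W] (H : SimpleGraph W)
    [DecidableRel H.Adj] (ha : H.IsAcyclic) (hne : Nonempty W) :
    ∃ v, H.degree v ≤ 1 := by
  classical
  set Lset : Set ℕ := {n | ∃ (u w : W) (p : H.Walk u w), p.IsPath ∧ p.length = n} with hLset
  have hbdd : BddAbove Lset := by
    refine ⟨Fintype.card W, ?_⟩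
    rintro n ⟨u, w, p, hp, rfl⟩
    exact le_of_lt hp.length_lt
  have hnon : Lset.Nonempty := by
    obtain ⟨u⟩ := hne
    exact ⟨0, u, u, Walk.nil, Walk.IsPath.nil, rfl⟩
  obtain ⟨u, w, p, hp, hplen⟩ := Nat.sSup_mem hnon hbdd
  refine ⟨u, ?_⟩
  by_contra hdeg
  push_neg at hdeg
  obtain ⟨x, hx, y, hy, hxy⟩ := Finset.one_lt_card.mp hdeg
  rw [mem_neighborFinset] at hx hy
  -- every neighbour of u lies on p, and the path along p to it is the single edge
  have hkey : ∀ z, H.Adj u z → z = p.getVert 1 := by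
    intro z hz
    have hzsup : z ∈ p.support := by
      by_contra hzs
      have hq : (p.cons hz.symm).IsPath := (Walk.cons_isPath_iff _ _).mpr ⟨hp, hzs⟩
      have : (p.cons hz.symm).length ∈ Lset := ⟨z, w, _, hq, rfl⟩
      have := le_csSup hbdd this
      simp only [Walk.length_cons, hplen] at this
      omega
    have h1 : (p.takeUntil z hzsup).IsPath := hp.takeUntil hzsup
    have h2 : (Walk.cons hz Walk.nil : H.Walk u z).IsPath := by
      rw [Walk.cons_isPath_iff]
      exact ⟨Walk.IsPath.nil, by simp; exact hz.ne⟩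
    have hEq : p.takeUntil z hzsup = Walk.cons hz Walk.nil := by
      have := ha.path_unique ⟨p.takeUntil z hzsup, h1⟩ ⟨Walk.cons hz Walk.nil, h2⟩
      exact congrArg Subtype.val this
    have hspec := p.take_spec hzsup
    rw [hEq] at hspec
    rw [← hspec]
    simp [Walk.getVert_cons_succ]
  have := (hkey x hx).trans (hkey y hy).symm
  exact hxy this

end Leaf


section Struct

open SimpleGraph

variable {V : Type*} [Fintype V] [DecidableEq V] (G : SimpleGraph V) (S : Finset V)

open Classical in
/-- degree of `v` within `S`. -/
noncomputable def degS (v : V) : ℕ := (S.filter (fun u => G.Adj v u)).card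

open Classical in
lemma ncard_set_nbr (v : V) : {u ∈ (S : Set V) | G.Adj v u}.ncard = degS G S v := by
  have : {u ∈ (S : Set V) | G.Adj v u} = ↑(S.filter (fun u => G.Adj v u)) := by
    ext u; simp
  rw [this, Set.ncard_coe_finset, degS]

open Classical in
lemma mem_pruneRemoved {v : V} :
    v ∈ pruneRemoved G S ↔ v ∈ S ∧ (degS G S v ≤ 1 ∨
      ∃ u ∈ S, G.Adj v u ∧ degS G S u = 1) := by
  rw [pruneRemoved, mem_filter]
  simp only [ncard_set_nbr]

open Classical in
lemma ncard_supp_nbr (v : ↥((S : Set V))) :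
    {u | (G.induce (S : Set V)).Adj v u}.ncard = degS G S v.val := by
  have himg : Subtype.val '' {u | (G.induce (S : Set V)).Adj v u}
      = ↑(S.filter (fun u => G.Adj v.val u)) := by
    ext u
    simp only [Set.mem_image, Set.mem_setOf_eq, coe_filter, comap_adj,
      Function.Embedding.coe_subtype, mem_coe, Set.mem_setOf_eq]
    constructor
    · rintro ⟨x, hx, rfl⟩; exact ⟨by exact_mod_cast x.2, hx⟩
    · rintro ⟨hu, hadj⟩; exact ⟨⟨u, hu⟩, hadj, rfl⟩
  have := Set.ncard_image_of_injective {u | (G.induce (S : Set V)).Adj v u}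
    (Subtype.val_injective)
  rw [himg, Set.ncard_coe_finset] at this
  rw [← this, degS]

open Classical in
/-- the vertex set of the connected component `c` of the induced graph, as a `Finset` of `V`. -/
noncomputable def compV (c : (G.induce (S : Set V)).ConnectedComponent) : Finset V :=
  S.filter (fun v => ∃ h : v ∈ (S : Set V), (G.induce (S : Set V)).connectedComponentMk ⟨v, h⟩ = c)

open Classical in
lemma mem_compV {c : (G.induce (S : Set V)).ConnectedComponent} {v : V} :
    v ∈ compV G S c ↔ ∃ h : v ∈ (S : Set V), (G.induce (S : Set V)).connectedComponentMk ⟨v, h⟩ = c := by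
  rw [compV, mem_filter]
  constructor
  · exact fun h => h.2
  · rintro ⟨h, hc⟩; exact ⟨by exact_mod_cast h, h, hc⟩

open Classical in
lemma compV_subset (c : (G.induce (S : Set V)).ConnectedComponent) : compV G S c ⊆ S := by
  rw [compV]; exact filter_subset _ _

open Classical in
lemma supp_eq_image (c : (G.induce (S : Set V)).ConnectedComponent) :
    Subtype.val '' c.supp = ↑(compV G S c) := by
  ext v
  simp only [Set.mem_image, ConnectedComponent.mem_supp_iff, mem_coe, mem_compV]
  constructor
  · rintro ⟨x, hx, rfl⟩; exact ⟨x.2, by convert hx⟩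
  · rintro ⟨h, hc⟩; exact ⟨⟨v, h⟩, hc, rfl⟩

open Classical in
lemma ncard_supp (c : (G.induce (S : Set V)).ConnectedComponent) :
    c.supp.ncard = (compV G S c).card := by
  rw [← Set.ncard_coe_finset, ← supp_eq_image, Set.ncard_image_of_injective _ Subtype.val_injective]

open Classical in
/-- the leaves of component `c`, at the level of `V`. -/
noncomputable def leafV (c : (G.induce (S : Set V)).ConnectedComponent) : Finset V :=
  (compV G S c).filter (fun v => degS G S v = 1)

open Classical in
lemma ncard_leaves (c : (G.induce (S : Set V)).ConnectedComponent) :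
    {v ∈ c.supp | {u | (G.induce (S : Set V)).Adj v u}.ncard = 1}.ncard = (leafV G S c).card := by
  have himg : Subtype.val '' {v ∈ c.supp | {u | (G.induce (S : Set V)).Adj v u}.ncard = 1}
      = ↑(leafV G S c) := by
    ext v
    simp only [Set.mem_image, Set.mem_setOf_eq, leafV, coe_filter, mem_coe, Set.mem_sep_iff]
    constructor
    · rintro ⟨x, ⟨hx1, hx2⟩, rfl⟩
      rw [ncard_supp_nbr] at hx2
      refine ⟨(mem_compV G S).mpr ⟨x.2, ?_⟩, hx2⟩
      rw [ConnectedComponent.mem_supp_iff] at hx1; convert hx1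
    · rintro ⟨hv, hd⟩
      rcases (mem_compV G S).mp hv with ⟨h, hc⟩
      exact ⟨⟨v, h⟩, ⟨by rwa [ConnectedComponent.mem_supp_iff], by rwa [ncard_supp_nbr]⟩, rfl⟩
  rw [← Set.ncard_coe_finset, ← himg, Set.ncard_image_of_injective _ Subtype.val_injective]


open Classical in
lemma sum_univ_inst_congr {α : Type*} (i1 i2 : Fintype α) (f : α → ℕ) :
    @Finset.sum α ℕ _ (@Finset.univ α i1) f = @Finset.sum α ℕ _ (@Finset.univ α i2) f := by
  rw [Subsingleton.elim i1 i2]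

open Classical in
lemma pruneStepCount_eq :
    pruneStepCount G S = ∑ c : (G.induce (S : Set V)).ConnectedComponent,
      (if (compV G S c).card ≤ 2 then 1 else (leafV G S c).card) := by
  rw [pruneStepCount]
  rw [sum_univ_inst_congr (Fintype.ofFinite _) inferInstance]
  exact Finset.sum_congr rfl fun c _ => by rw [ncard_supp, ncard_leaves]

open Classical in
lemma mem_own_compV {v : V} (hv : v ∈ S) :
    v ∈ compV G S ((G.induce (S : Set V)).connectedComponentMk ⟨v, by exact_mod_cast hv⟩) :=
  (mem_compV G S).mpr ⟨by exact_mod_cast hv, rfl⟩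

open Classical in
lemma compV_eq_of_mem {c c' : (G.induce (S : Set V)).ConnectedComponent} {v : V}
    (h : v ∈ compV G S c) (h' : v ∈ compV G S c') : c = c' := by
  rcases (mem_compV G S).mp h with ⟨h1, hc⟩
  rcases (mem_compV G S).mp h' with ⟨h1', hc'⟩
  rw [← hc, ← hc']

open Classical in
lemma adj_mem_compV {c : (G.induce (S : Set V)).ConnectedComponent} {v u : V}
    (h : v ∈ compV G S c) (hu : u ∈ S) (hadj : G.Adj v u) : u ∈ compV G S c := by
  rcases (mem_compV G S).mp h with ⟨h1, hc⟩
  have hu' : u ∈ (S : Set V) := by exact_mod_cast hu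
  refine (mem_compV G S).mpr ⟨hu', ?_⟩
  rw [← hc]
  apply SimpleGraph.ConnectedComponent.sound
  have : (G.induce (S : Set V)).Adj ⟨u, hu'⟩ ⟨v, h1⟩ := by
    simp only [SimpleGraph.comap_adj, Function.Embedding.coe_subtype]
    exact hadj.symm
  exact this.reachable

open Classical in
lemma biUnion_compV : Finset.univ.biUnion (compV G S) = S := by
  apply subset_antisymm
  · intro v hv
    rcases mem_biUnion.mp hv with ⟨c, _, hc⟩
    exact compV_subset G S c hc
  · intro v hv
    exact mem_biUnion.mpr ⟨_, mem_univ _, mem_own_compV G S hv⟩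

open Classical in
lemma sum_compV (f : V → ℕ) :
    ∑ c : (G.induce (S : Set V)).ConnectedComponent, ∑ v ∈ compV G S c, f v
      = ∑ v ∈ S, f v := by
  conv_rhs => rw [← biUnion_compV G S]
  rw [Finset.sum_biUnion]
  intro c _ c' _ hcc'
  simp only [Finset.disjoint_left]
  exact fun v hv hv' => hcc' (compV_eq_of_mem G S hv hv')

open Classical in
lemma compV_nonempty (c : (G.induce (S : Set V)).ConnectedComponent) :
    (compV G S c).Nonempty := by
  obtain ⟨v, hv⟩ := c.exists_rep
  refine ⟨v.val, (mem_compV G S).mpr ⟨v.2, ?_⟩⟩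
  rw [← hv]
  rfl


open Classical in
/-- if a set `T` is closed under `S`-adjacency and contains a point of the component `c`,
then it contains all of `c`. -/
lemma compV_subset_closed {T : Finset V}
    (hcl : ∀ a ∈ T, ∀ b ∈ S, G.Adj a b → b ∈ T)
    {c : (G.induce (S : Set V)).ConnectedComponent} {w : V}
    (hw : w ∈ compV G S c) (hwT : w ∈ T) : compV G S c ⊆ T := by
  rcases (mem_compV G S).mp hw with ⟨hw1, hc⟩
  intro x hx
  rcases (mem_compV G S).mp hx with ⟨hx1, hcx⟩
  have hre : (G.induce (S : Set V)).Reachable ⟨w, hw1⟩ ⟨x, hx1⟩ := by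
    rw [← SimpleGraph.ConnectedComponent.eq, hc, hcx]
  obtain ⟨p⟩ := hre
  have key : ∀ (a b : ↥((S : Set V))) (q : (G.induce (S : Set V)).Walk a b),
      a.val ∈ T → b.val ∈ T := by
    intro a b q
    induction q with
    | nil => exact id
    | @cons a' b' d' h' q' ih =>
      intro ha
      refine ih (hcl a'.val ha b'.val (by exact_mod_cast b'.2) ?_)
      simpa using h'
  exact key _ _ p hwT

open Classical in
lemma exists_adj_of_ne_mem_compV {c : (G.induce (S : Set V)).ConnectedComponent}
    {v u : V} (hv : v ∈ compV G S c) (hu : u ∈ compV G S c) (hne : v ≠ u) :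
    ∃ x ∈ S, G.Adj v x := by
  rcases (mem_compV G S).mp hv with ⟨hv1, hcv⟩
  rcases (mem_compV G S).mp hu with ⟨hu1, hcu⟩
  have hre : (G.induce (S : Set V)).Reachable ⟨v, hv1⟩ ⟨u, hu1⟩ := by
    rw [← SimpleGraph.ConnectedComponent.eq, hcv, hcu]
  obtain ⟨p⟩ := hre
  cases p with
  | nil => exact absurd rfl hne
  | @cons a b d h p => exact ⟨b.val, by exact_mod_cast b.2, by simpa using h⟩

open Classical in
lemma one_le_degS_of_big {c : (G.induce (S : Set V)).ConnectedComponent}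
    (hbig : 2 ≤ (compV G S c).card) {v : V} (hv : v ∈ compV G S c) :
    1 ≤ degS G S v := by
  obtain ⟨u, hu, hne⟩ := Finset.exists_mem_ne hbig v
  obtain ⟨x, hx, hadj⟩ := exists_adj_of_ne_mem_compV G S hv hu (Ne.symm hne)
  rw [degS]
  exact Finset.card_pos.mpr ⟨x, mem_filter.mpr ⟨hx, hadj⟩⟩

open Classical in
lemma degS_le_one_of_small {c : (G.induce (S : Set V)).ConnectedComponent}
    (hsmall : (compV G S c).card ≤ 2) {v : V} (hv : v ∈ compV G S c) :
    degS G S v ≤ 1 := by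
  have hsub : S.filter (fun u => G.Adj v u) ⊆ (compV G S c).erase v := by
    intro u hu
    rw [mem_filter] at hu
    exact Finset.mem_erase.mpr ⟨fun h => (G.irrefl (h ▸ hu.2)), adj_mem_compV G S hv hu.1 hu.2⟩
  calc degS G S v ≤ ((compV G S c).erase v).card := Finset.card_le_card hsub
    _ ≤ (compV G S c).card - 1 := by rw [Finset.card_erase_of_mem hv]
    _ ≤ 1 := by omega

open Classical in
lemma stem_of_leaf {v : V} (hv : v ∈ S) (hdeg : degS G S v = 1) :
    ∃ w, S.filter (fun u => G.Adj v u) = {w} := Finset.card_eq_one.mp hdeg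

open Classical in
/-- In a component with at least 3 vertices, a vertex adjacent to a leaf is not itself
a leaf. -/
lemma stem_not_leaf {c : (G.induce (S : Set V)).ConnectedComponent}
    (hbig : 3 ≤ (compV G S c).card) {v w : V} (hv : v ∈ compV G S c)
    (hdegv : degS G S v = 1) (hw : w ∈ S) (hadj : G.Adj v w) : 2 ≤ degS G S w := by
  by_contra hlt
  push_neg at hlt
  have hwc : w ∈ compV G S c := adj_mem_compV G S hv hw hadj
  have hdegw : degS G S w = 1 := by
    have : 1 ≤ degS G S w := one_le_degS_of_big G S (by omega) hwc
    omega
  have hvS : v ∈ S := compV_subset G S c hv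
  have hcl : ∀ a ∈ ({v, w} : Finset V), ∀ b ∈ S, G.Adj a b → b ∈ ({v, w} : Finset V) := by
    intro a ha b hb hab
    rcases Finset.mem_insert.mp ha with rfl | ha
    · obtain ⟨x, hx⟩ := stem_of_leaf G S hvS hdegv
      have hwx : w ∈ S.filter (fun u => G.Adj a u) := mem_filter.mpr ⟨hw, hadj⟩
      have hbx : b ∈ S.filter (fun u => G.Adj a u) := mem_filter.mpr ⟨hb, hab⟩
      rw [hx, Finset.mem_singleton] at hwx hbx
      simp [hbx, hwx]
    · rw [Finset.mem_singleton] at ha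
      subst ha
      obtain ⟨x, hx⟩ := stem_of_leaf G S hw hdegw
      have hwx : v ∈ S.filter (fun u => G.Adj a u) := mem_filter.mpr ⟨hvS, hadj.symm⟩
      have hbx : b ∈ S.filter (fun u => G.Adj a u) := mem_filter.mpr ⟨hb, hab⟩
      rw [hx, Finset.mem_singleton] at hwx hbx
      simp [hbx, hwx]
  have hsub := compV_subset_closed G S hcl hv (by simp)
  have h1 := Finset.card_le_card hsub
  have h2 : ({v, w} : Finset V).card ≤ 2 := (Finset.card_insert_le _ _).trans (by simp)
  omega


open Classical in
/-- a chosen vertex in each connected component. -/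
noncomputable def pick (c : (G.induce (S : Set V)).ConnectedComponent) : V :=
  (compV_nonempty G S c).choose

open Classical in
lemma pick_mem (c : (G.induce (S : Set V)).ConnectedComponent) :
    pick G S c ∈ compV G S c := (compV_nonempty G S c).choose_spec

open Classical in
/-- the set of vertices on which the pruning algorithm places searchers in this round. -/
noncomputable def placed : Finset V :=
  Finset.univ.biUnion (fun c => if (compV G S c).card ≤ 2 then {pick G S c} else leafV G S c)

open Classical in
lemma placed_piece_subset (c : (G.induce (S : Set V)).ConnectedComponent) :
    (if (compV G S c).card ≤ 2 then {pick G S c} else leafV G S c) ⊆ compV G S c := by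
  split
  · simp [pick_mem]
  · exact filter_subset _ _

open Classical in
lemma placed_subset : placed G S ⊆ S := by
  intro v hv
  rcases mem_biUnion.mp hv with ⟨c, _, hc⟩
  exact compV_subset G S c (placed_piece_subset G S c hc)

open Classical in
lemma card_placed : (placed G S).card = pruneStepCount G S := by
  rw [placed, Finset.card_biUnion, pruneStepCount_eq]
  · refine Finset.sum_congr rfl fun c _ => ?_
    split <;> simp
  · intro c _ c' _ hne
    simp only [Finset.disjoint_left]
    intro v hv hv'
    exact hne (compV_eq_of_mem G S (placed_piece_subset G S c hv)
      (placed_piece_subset G S c' hv'))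

open Classical in
lemma leaf_mem_placed {c : (G.induce (S : Set V)).ConnectedComponent}
    (hbig : ¬ (compV G S c).card ≤ 2) {v : V} (hv : v ∈ compV G S c)
    (hdeg : degS G S v = 1) : v ∈ placed G S := by
  refine mem_biUnion.mpr ⟨c, mem_univ _, ?_⟩
  rw [if_neg hbig]
  exact mem_filter.mpr ⟨hv, hdeg⟩

open Classical in
lemma pick_mem_placed {c : (G.induce (S : Set V)).ConnectedComponent}
    (hsmall : (compV G S c).card ≤ 2) : pick G S c ∈ placed G S := by
  refine mem_biUnion.mpr ⟨c, mem_univ _, ?_⟩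
  rw [if_pos hsmall]
  exact mem_singleton_self _

section ConstructA

variable (L : V → ℕ)

open Classical in
lemma fires_step0 {v : V} (hv : v ∈ S) (hL : 0 < L v) (hdeg : degS G S v ≤ L v) :
    v ∈ fireSet G S L 0 := by
  refine (mem_fireSet G).mpr ⟨hv, hL, by simp [run_zero, initSt], ?_⟩
  refine le_trans (Finset.card_le_card ?_) hdeg
  intro u hu
  rw [mem_nbrS] at hu
  exact mem_filter.mpr ⟨hu.1, hu.2.1⟩

open Classical in
lemma nbr_in_P1 {v u : V} (hfire : v ∈ fireSet G S L 0) (hu : u ∈ S)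
    (hadj : G.Adj v u) : u ∈ (run G S L 1).1 := by
  by_cases hP : u ∈ (run G S L 0).1
  · exact run_fst_mono G S L (Nat.zero_le 1) hP
  · exact fire_effect G hfire ((mem_nbrS G).mpr ⟨hu, hadj, hP⟩)

end ConstructA

section UpperBound

variable (L0 : V → ℕ)

open Classical in
noncomputable def layoutA : V → ℕ := fun v => L0 v + (if v ∈ placed G S then 1 else 0)

open Classical in
lemma layoutA_placed_pos {v : V} (hv : v ∈ placed G S) : 0 < layoutA G S L0 v := by
  simp [layoutA, hv]

open Classical in
lemma placed_in_P0 {v : V} (hv : v ∈ placed G S) :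
    v ∈ (run G S (layoutA G S L0) 0).1 := by
  rw [run_zero]
  exact mem_init_fst.mpr ⟨placed_subset G S hv, layoutA_placed_pos G S L0 hv⟩

open Classical in
lemma removed_subset_P1 : pruneRemoved G S ⊆ (run G S (layoutA G S L0) 1).1 := by
  intro u hu
  rcases (mem_pruneRemoved G S).mp hu with ⟨huS, hrem⟩
  have huS' : u ∈ (S : Set V) := by exact_mod_cast huS
  set c := (G.induce (S : Set V)).connectedComponentMk ⟨u, huS'⟩ with hc
  have hucomp : u ∈ compV G S c := mem_own_compV G S huS
  by_cases hsmall : (compV G S c).card ≤ 2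
  · -- small component
    by_cases hup : u = pick G S c
    · exact run_fst_mono G S _ (Nat.zero_le 1)
        (placed_in_P0 G S L0 (hup ▸ pick_mem_placed G S hsmall))
    · have hpmem := pick_mem G S c
      have hfire : pick G S c ∈ fireSet G S (layoutA G S L0) 0 :=
        fires_step0 G S _ (compV_subset G S c hpmem)
          (layoutA_placed_pos G S L0 (pick_mem_placed G S hsmall))
          (le_trans (degS_le_one_of_small G S hsmall hpmem)
            (layoutA_placed_pos G S L0 (pick_mem_placed G S hsmall)))
      -- u is adjacent to pick
      obtain ⟨x, hx, hadj⟩ := exists_adj_of_ne_mem_compV G S hucomp hpmem hup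
      have hxcomp : x ∈ compV G S c := adj_mem_compV G S hucomp hx hadj
      have hxu : x ≠ u := fun h => G.irrefl (h ▸ hadj)
      have hcomp_eq : compV G S c = {u, pick G S c} := by
        refine (Finset.eq_of_subset_of_card_le ?_ ?_).symm
        · intro y hy
          rcases Finset.mem_insert.mp hy with rfl | hy
          · exact hucomp
          · rw [Finset.mem_singleton] at hy; exact hy ▸ hpmem
        · rw [Finset.card_insert_of_notMem (by simp [hup]), Finset.card_singleton]
          exact hsmall
      have hxpick : x = pick G S c := by
        have := hcomp_eq ▸ hxcomp
        rcases Finset.mem_insert.mp this with h | h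
        · exact absurd h hxu
        · rwa [Finset.mem_singleton] at h
      exact nbr_in_P1 G S _ hfire huS (hxpick ▸ hadj).symm
  · -- big component
    rcases hrem with hdeg | ⟨x, hx, hadj, hdegx⟩
    · have h1 : 1 ≤ degS G S u := one_le_degS_of_big G S (by omega) hucomp
      have : degS G S u = 1 := le_antisymm hdeg h1
      exact run_fst_mono G S _ (Nat.zero_le 1)
        (placed_in_P0 G S L0 (leaf_mem_placed G S hsmall hucomp this))
    · -- u is a stem: its leaf neighbour x fires
      have hxcomp : x ∈ compV G S c := adj_mem_compV G S hucomp hx hadj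
      have hxplaced : x ∈ placed G S := leaf_mem_placed G S hsmall hxcomp hdegx
      have hfire : x ∈ fireSet G S (layoutA G S L0) 0 :=
        fires_step0 G S _ hx (layoutA_placed_pos G S L0 hxplaced)
          (le_trans (le_of_eq hdegx) (layoutA_placed_pos G S L0 hxplaced))
      exact nbr_in_P1 G S _ hfire huS hadj.symm

open Classical in
lemma upper_bound_succ
    (h0 : ∀ v ∉ S \ pruneRemoved G S, L0 v = 0)
    (hsucc : RelSucc G (S \ pruneRemoved G S) L0) :
    RelSucc G S (layoutA G S L0) := by
  obtain ⟨k, hk⟩ := hsucc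
  set Sd := S \ pruneRemoved G S with hSd
  set L := layoutA G S L0 with hL
  have hsim := sim G (S₁ := Sd) (S₂ := S) (L₁ := L0) (L₂ := L)
    (τ₀ := run G S L 1)
    (goodSt_run G S L 1)
    (by
      intro v hv hv2 hpos
      refine run_fst_mono G S L (Nat.zero_le 1) ?_
      refine mem_init_fst.mpr ⟨hv2, ?_⟩
      simp only [hL, layoutA]
      omega)
    (by intro v _ _; simp only [hL, layoutA]; omega)
    (by
      intro v hv hv2 u hu hadj hu1
      have : u ∈ pruneRemoved G S := by
        by_contra h
        exact hu1 (Finset.mem_sdiff.mpr ⟨hu, h⟩)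
      exact removed_subset_P1 G S L0 this)
    (by
      intro k w hw hw2
      exact absurd (Finset.mem_sdiff.mp ((mem_fireSet G).mp hw).1).1 hw2)
  refine ⟨k + 1, ?_⟩
  intro v hv
  by_cases hvrem : v ∈ pruneRemoved G S
  · exact run_fst_mono G S L (by omega) (removed_subset_P1 G S L0 hvrem)
  · have hvSd : v ∈ Sd := Finset.mem_sdiff.mpr ⟨hv, hvrem⟩
    have := hsim k (Finset.mem_inter.mpr ⟨hk hvSd, hv⟩)
    have e : (relStep G S L)^[k] (run G S L 1) = run G S L (k+1) := by
      rw [show run G S L 1 = (relStep G S L)^[1] (initSt S L) from rfl,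
        ← Function.iterate_add_apply]
      rfl
    rw [e] at this
    exact this

open Classical in
lemma layoutA_support : ∀ v ∉ S, layoutA G S L0 v = 0 → True := fun _ _ _ => trivial

open Classical in
lemma sum_layoutA (h0 : ∀ v ∉ S \ pruneRemoved G S, L0 v = 0) :
    ∑ v ∈ S, layoutA G S L0 v = pruneStepCount G S + ∑ v ∈ S \ pruneRemoved G S, L0 v := by
  simp only [layoutA]
  rw [Finset.sum_add_distrib]
  have h1 : ∑ v ∈ S, (if v ∈ placed G S then 1 else 0) = (placed G S).card := by
    rw [← Finset.card_filter]
    congr 1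
    apply subset_antisymm
    · exact fun v hv => (mem_filter.mp hv).2
    · exact fun v hv => mem_filter.mpr ⟨placed_subset G S hv, hv⟩
  have h2 : ∑ v ∈ S, L0 v = ∑ v ∈ S \ pruneRemoved G S, L0 v := by
    rw [← Finset.sum_subset (Finset.sdiff_subset : S \ pruneRemoved G S ⊆ S)]
    intro x hx hxn
    exact h0 x hxn
  rw [h1, h2, card_placed]
  omega

end UpperBound


open Classical in
lemma eq_of_degS_one {u w w' : V} (hdeg : degS G S u = 1) (hw : w ∈ S)
    (ha : G.Adj u w) (hw' : w' ∈ S) (ha' : G.Adj u w') : w = w' := by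
  obtain ⟨x, hx⟩ := Finset.card_eq_one.mp hdeg
  have h1 : w ∈ S.filter (fun y => G.Adj u y) := mem_filter.mpr ⟨hw, ha⟩
  have h2 : w' ∈ S.filter (fun y => G.Adj u y) := mem_filter.mpr ⟨hw', ha'⟩
  rw [hx, Finset.mem_singleton] at h1 h2
  rw [h1, h2]

open Classical in
lemma sum_card_filter_comm (X W : Finset V) (R : V → V → Prop) :
    ∑ v ∈ X, (W.filter (fun w => R v w)).card
      = ∑ w ∈ W, (X.filter (fun v => R v w)).card := by
  simp only [Finset.card_filter]
  rw [Finset.sum_comm]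

section LowerBound

variable (L : V → ℕ)

open Classical in
/-- searchers received by `v` from outside `S \ pruneRemoved G S` during the run. -/
noncomputable def recvF (v : V) : Finset V :=
  S.filter (fun w => G.Adj v w ∧ w ∉ S \ pruneRemoved G S ∧
    ∃ t, w ∈ fireSet G S L t ∧ v ∉ (run G S L t).1)

open Classical in
noncomputable def layoutB : V → ℕ := fun v =>
  if v ∈ S \ pruneRemoved G S then L v + (recvF G S L v).card else 0

open Classical in
lemma layoutB_support : ∀ v ∉ S \ pruneRemoved G S, layoutB G S L v = 0 := by
  intro v hv; simp [layoutB, hv]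

open Classical in
lemma lower_bound_succ {K : ℕ} (hK : S ⊆ (run G S L K).1) :
    RelSucc G (S \ pruneRemoved G S) (layoutB G S L) := by
  set Sd := S \ pruneRemoved G S with hSd
  set L' := layoutB G S L with hL'
  have hsim := sim G (S₁ := S) (S₂ := Sd) (L₁ := L) (L₂ := L')
    (τ₀ := initSt Sd L')
    (goodSt_init G Sd L')
    (by
      intro v hv hv2 hpos
      refine mem_init_fst.mpr ⟨hv2, ?_⟩
      simp only [hL', layoutB, if_pos (show v ∈ S \ pruneRemoved G S from hv2)]
      omega)
    (by intro v hv hv2; simp only [hL', layoutB, if_pos (show v ∈ S \ pruneRemoved G S from hv2)]; omega)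
    (by
      intro v hv hv2 u hu hadj hu1
      exact absurd (Finset.mem_sdiff.mp hu).1 hu1)
    (by
      intro k w hw hw2 u hu hadj huP
      refine mem_init_fst.mpr ⟨hu, ?_⟩
      have hwrecv : w ∈ recvF G S L u :=
        mem_filter.mpr ⟨((mem_fireSet G).mp hw).1, hadj.symm, hw2, k, hw, huP⟩
      have : 0 < (recvF G S L u).card := Finset.card_pos.mpr ⟨w, hwrecv⟩
      simp only [hL', layoutB, if_pos (show u ∈ S \ pruneRemoved G S from hu)]
      omega)
  refine ⟨K, ?_⟩
  intro v hv
  have hvS : v ∈ S := (Finset.mem_sdiff.mp hv).1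
  have := hsim K (Finset.mem_inter.mpr ⟨hK hvS, hv⟩)
  exact this

open Classical in
lemma comp_has_searcher {K : ℕ} (hK : S ⊆ (run G S L K).1)
    (c : (G.induce (S : Set V)).ConnectedComponent) :
    ∃ v ∈ compV G S c, 0 < L v := by
  by_contra hno
  push_neg at hno
  have hempty : ∀ k, ∀ v ∈ compV G S c, v ∉ (run G S L k).1 := by
    intro k
    induction k with
    | zero =>
      intro v hv hvP
      rw [run_zero] at hvP
      exact absurd (mem_init_fst.mp hvP).2 (by simpa using hno v hv)
    | succ n ih =>
      intro v hv hvP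
      rw [fst_run_succ] at hvP
      rcases mem_union.mp hvP with h | h
      · exact ih v hv h
      · rcases mem_biUnion.mp h with ⟨w, hw, hvw⟩
        rw [mem_nbrS] at hvw
        have hwS := ((mem_fireSet G).mp hw).1
        have hwc : w ∈ compV G S c := adj_mem_compV G S hv hwS hvw.2.1.symm
        have := hno w hwc
        have := ((mem_fireSet G).mp hw).2.1
        omega
  obtain ⟨v, hv⟩ := compV_nonempty G S c
  exact hempty K v hv (hK (compV_subset G S c hv))

open Classical in
/-- the per-component counting inequality. -/
lemma per_component_count {K : ℕ} (hK : S ⊆ (run G S L K).1)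
    (c : (G.induce (S : Set V)).ConnectedComponent) :
    (if (compV G S c).card ≤ 2 then 1 else (leafV G S c).card) +
      ∑ v ∈ compV G S c, (if v ∈ S \ pruneRemoved G S
        then L v + (recvF G S L v).card else 0)
      ≤ ∑ v ∈ compV G S c, L v := by
  set Sd := S \ pruneRemoved G S with hSd
  by_cases hsmall : (compV G S c).card ≤ 2
  · -- small component: everything removed, and it has a searcher
    rw [if_pos hsmall]
    have hg0 : ∀ v ∈ compV G S c, (if v ∈ Sd then L v + (recvF G S L v).card else 0) = 0 := by
      intro v hv
      rw [if_neg]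
      intro hvSd
      rcases Finset.mem_sdiff.mp hvSd with ⟨hvS, hvrem⟩
      exact hvrem ((mem_pruneRemoved G S).mpr
        ⟨hvS, Or.inl (degS_le_one_of_small G S hsmall hv)⟩)
    rw [Finset.sum_congr rfl hg0]
    simp only [Finset.sum_const_zero, Nat.add_zero]
    obtain ⟨v, hv, hvL⟩ := comp_has_searcher G S L hK c
    calc 1 ≤ L v := hvL
      _ ≤ ∑ v ∈ compV G S c, L v := Finset.single_le_sum (fun _ _ => Nat.zero_le _) hv
  · -- big component
    rw [if_neg hsmall]
    have hbig3 : 3 ≤ (compV G S c).card := by omega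
    set lvs := leafV G S c with hlvs
    set stems := (compV G S c).filter
      (fun w => ∃ x ∈ S, G.Adj w x ∧ degS G S x = 1) with hstems
    -- basic facts
    have hlvs_sub : lvs ⊆ compV G S c := filter_subset _ _
    have hstems_sub : stems ⊆ compV G S c := filter_subset _ _
    have hlvs_S : ∀ v ∈ lvs, v ∈ S := fun v hv => compV_subset G S c (hlvs_sub hv)
    have hdisj : Disjoint lvs stems := by
      rw [Finset.disjoint_left]
      intro w hw hw'
      rcases mem_filter.mp hw with ⟨hwc, hwdeg⟩
      rcases mem_filter.mp hw' with ⟨_, x, hxS, hadj, hxdeg⟩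
      have hxc : x ∈ compV G S c := adj_mem_compV G S hwc hxS hadj
      have := stem_not_leaf G S hbig3 hxc hxdeg (compV_subset G S c hwc) hadj.symm
      omega
    have hlvs_not_Sd : ∀ v ∈ lvs, v ∉ Sd := by
      intro v hv hvSd
      rcases mem_filter.mp hv with ⟨hvc, hdeg⟩
      exact (Finset.mem_sdiff.mp hvSd).2 ((mem_pruneRemoved G S).mpr
        ⟨compV_subset G S c hvc, Or.inl (le_of_eq hdeg)⟩)
    have hstems_not_Sd : ∀ w ∈ stems, w ∉ Sd := by
      intro w hw hwSd
      rcases mem_filter.mp hw with ⟨hwc, hx⟩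
      exact (Finset.mem_sdiff.mp hwSd).2 ((mem_pruneRemoved G S).mpr
        ⟨compV_subset G S c hwc, Or.inr hx⟩)
    -- the removed part of the component is exactly lvs ∪ stems
    have hrem_eq : (compV G S c).filter (fun v => v ∉ Sd) = lvs ∪ stems := by
      apply subset_antisymm
      · intro v hv
        rcases mem_filter.mp hv with ⟨hvc, hvSd⟩
        have hvS : v ∈ S := compV_subset G S c hvc
        have hvrem : v ∈ pruneRemoved G S := by
          by_contra h
          exact hvSd (Finset.mem_sdiff.mpr ⟨hvS, h⟩)
        rcases ((mem_pruneRemoved G S).mp hvrem).2 with hdeg | hstem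
        · have h1 : 1 ≤ degS G S v := one_le_degS_of_big G S (by omega) hvc
          exact mem_union_left _ (mem_filter.mpr ⟨hvc, le_antisymm hdeg h1⟩)
        · exact mem_union_right _ (mem_filter.mpr ⟨hvc, hstem⟩)
      · intro v hv
        rcases mem_union.mp hv with h | h
        · exact mem_filter.mpr ⟨hlvs_sub h, hlvs_not_Sd v h⟩
        · exact mem_filter.mpr ⟨hstems_sub h, hstems_not_Sd v h⟩
    -- split the sums
    have hsplitL : ∑ v ∈ compV G S c, L v
        = (∑ v ∈ lvs, L v + ∑ w ∈ stems, L w) +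
          ∑ v ∈ (compV G S c).filter (fun v => v ∈ Sd), L v := by
      rw [← Finset.sum_filter_add_sum_filter_not (compV G S c) (fun v => v ∈ Sd) L]
      rw [show (compV G S c).filter (fun v => ¬ v ∈ Sd) = lvs ∪ stems from hrem_eq,
        Finset.sum_union hdisj]
      omega
    have hsplitg : ∑ v ∈ compV G S c, (if v ∈ Sd then L v + (recvF G S L v).card else 0)
        = ∑ v ∈ (compV G S c).filter (fun v => v ∈ Sd), (L v + (recvF G S L v).card) := by
      rw [Finset.sum_filter]
    -- per-stem charge
    set X := (compV G S c).filter (fun v => v ∈ Sd) with hX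
    set R : V → V → Prop := fun v w => G.Adj v w ∧
      ∃ t, w ∈ fireSet G S L t ∧ v ∉ (run G S L t).1 with hR
    have hrecv_eq : ∀ v ∈ X, recvF G S L v = stems.filter (fun w => R v w) := by
      intro v hv
      rcases mem_filter.mp hv with ⟨hvc, hvSd⟩
      have hvS : v ∈ S := compV_subset G S c hvc
      apply subset_antisymm
      · intro w hw
        rcases mem_filter.mp hw with ⟨hwS, hadj, hwSd, t, hft, hvP⟩
        have hwc : w ∈ compV G S c := adj_mem_compV G S hvc hwS hadj
        refine mem_filter.mpr ⟨?_, hadj, t, hft, hvP⟩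
        -- w is removed; it cannot be a leaf (else v would be a stem, hence removed)
        have hwrem : w ∈ pruneRemoved G S := by
          by_contra h
          exact hwSd (Finset.mem_sdiff.mpr ⟨hwS, h⟩)
        rcases ((mem_pruneRemoved G S).mp hwrem).2 with hdeg | hstem
        · exfalso
          have h1 : 1 ≤ degS G S w := one_le_degS_of_big G S (by omega) hwc
          have hwleaf : degS G S w = 1 := le_antisymm hdeg h1
          exact (Finset.mem_sdiff.mp hvSd).2 ((mem_pruneRemoved G S).mpr
            ⟨hvS, Or.inr ⟨w, hwS, hadj, hwleaf⟩⟩)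
        · exact mem_filter.mpr ⟨hwc, hstem⟩
      · intro w hw
        rcases mem_filter.mp hw with ⟨hws, hadj, ht⟩
        exact mem_filter.mpr ⟨compV_subset G S c (hstems_sub hws), hadj,
          hstems_not_Sd w hws, ht⟩
    have hswap : ∑ v ∈ X, (recvF G S L v).card
        = ∑ w ∈ stems, (X.filter (fun v => R v w)).card := by
      rw [Finset.sum_congr rfl (fun v hv => by rw [hrecv_eq v hv])]
      simp only [Finset.card_filter]
      rw [Finset.sum_comm]
    -- the A-sets
    set Aset : V → Finset V := fun w => lvs.filter (fun u => G.Adj w u ∧ L u = 0) with hAset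
    -- a leaf that is protected but has no searcher must have been fired upon by its
    -- unique neighbour
    have hleaf_fired : ∀ u ∈ lvs, L u = 0 → ∀ w ∈ S, G.Adj u w →
        ∀ k, u ∈ (run G S L k).1 → w ∈ (run G S L k).2 := by
      intro u hu hLu w hwS hadj k hP
      rcases mem_filter.mp hu with ⟨huc, hudeg⟩
      rcases cause_of_protect G hP with h0 | ⟨w', hw', hadj'⟩
      · rw [mem_init_fst] at h0; omega
      · have hw'S : w' ∈ S := (goodSt_run G S L k).2.1 hw'
        have : w = w' := eq_of_degS_one G S hudeg hwS hadj hw'S hadj'.symm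
        rwa [this]
    -- per-stem inequality
    have hperstem : ∀ w ∈ stems, (Aset w).card + (X.filter (fun v => R v w)).card ≤ L w := by
      intro w hw
      have hwS : w ∈ S := compV_subset G S c (hstems_sub hw)
      by_cases hfire : ∃ t, w ∈ fireSet G S L t
      · obtain ⟨t, hft⟩ := hfire
        have hwcond := (mem_fireSet G).mp hft
        have hAsub : Aset w ⊆ nbrS G S (run G S L t).1 w := by
          intro u hu
          rcases mem_filter.mp hu with ⟨hul, hadj, hLu⟩
          refine (mem_nbrS G).mpr ⟨hlvs_S u hul, hadj, ?_⟩
          intro hP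
          exact hwcond.2.2.1 (hleaf_fired u hul hLu w hwS hadj.symm t hP)
        have hBsub : X.filter (fun v => R v w) ⊆ nbrS G S (run G S L t).1 w := by
          intro v hv
          rcases mem_filter.mp hv with ⟨hvX, hadj, t', hft', hvP⟩
          have : t' = t := fireSet_unique G hft' hft
          subst this
          exact (mem_nbrS G).mpr ⟨compV_subset G S c (mem_filter.mp hvX).1, hadj.symm, hvP⟩
        have hABdisj : Disjoint (Aset w) (X.filter (fun v => R v w)) := by
          rw [Finset.disjoint_left]
          intro u hu hu'
          exact hlvs_not_Sd u (mem_filter.mp hu).1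
            (mem_filter.mp (mem_filter.mp hu').1).2
        calc (Aset w).card + (X.filter (fun v => R v w)).card
            = ((Aset w) ∪ (X.filter (fun v => R v w))).card :=
              (Finset.card_union_of_disjoint hABdisj).symm
          _ ≤ (nbrS G S (run G S L t).1 w).card :=
              Finset.card_le_card (Finset.union_subset hAsub hBsub)
          _ ≤ L w := hwcond.2.2.2
      · -- w never fires: both sets are empty
        have hA : Aset w = ∅ := by
          rw [Finset.eq_empty_iff_forall_notMem]
          intro u hu
          rcases mem_filter.mp hu with ⟨hul, hadj, hLu⟩
          have huS : u ∈ S := hlvs_S u hul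
          have := hleaf_fired u hul hLu w hwS hadj.symm K (hK huS)
          rcases (mem_snd_iff_fireSet G).mp this with ⟨t, _, hft⟩
          exact hfire ⟨t, hft⟩
        have hB : X.filter (fun v => R v w) = ∅ := by
          rw [Finset.eq_empty_iff_forall_notMem]
          intro v hv
          rcases mem_filter.mp hv with ⟨_, _, t, hft, _⟩
          exact hfire ⟨t, hft⟩
        rw [hA, hB]
        simp
    -- counting leaves
    have hleafcount : lvs.card ≤ (lvs.filter (fun u => 0 < L u)).card
        + ∑ w ∈ stems, (Aset w).card := by
      have hsplit : lvs.card = (lvs.filter (fun u => 0 < L u)).card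
          + (lvs.filter (fun u => ¬ 0 < L u)).card :=
        (Finset.card_filter_add_card_filter_not _).symm
      have hzero_sub : lvs.filter (fun u => ¬ 0 < L u) ⊆ stems.biUnion Aset := by
        intro u hu
        rcases mem_filter.mp hu with ⟨hul, hLu⟩
        have hLu0 : L u = 0 := by omega
        rcases mem_filter.mp hul with ⟨huc, hudeg⟩
        have huS : u ∈ S := compV_subset G S c huc
        obtain ⟨w, hwsing⟩ := stem_of_leaf G S huS hudeg
        have hwS : w ∈ S := by
          have : w ∈ S.filter (fun y => G.Adj u y) := by rw [hwsing]; simp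
          exact (mem_filter.mp this).1
        have hadj : G.Adj u w := by
          have : w ∈ S.filter (fun y => G.Adj u y) := by rw [hwsing]; simp
          exact (mem_filter.mp this).2
        have hwst : w ∈ stems := mem_filter.mpr
          ⟨adj_mem_compV G S huc hwS hadj, u, huS, hadj.symm, hudeg⟩
        exact mem_biUnion.mpr ⟨w, hwst, mem_filter.mpr ⟨hul, hadj.symm, hLu0⟩⟩
      calc lvs.card = _ + _ := hsplit
        _ ≤ (lvs.filter (fun u => 0 < L u)).card + (stems.biUnion Aset).card := by
            have := Finset.card_le_card hzero_sub
            omega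
        _ ≤ (lvs.filter (fun u => 0 < L u)).card + ∑ w ∈ stems, (Aset w).card := by
            have := Finset.card_biUnion_le (s := stems) (t := Aset)
            omega
    -- searchers on leaves
    have hleafL : (lvs.filter (fun u => 0 < L u)).card ≤ ∑ v ∈ lvs, L v := by
      calc (lvs.filter (fun u => 0 < L u)).card
          = ∑ u ∈ lvs.filter (fun u => 0 < L u), 1 := by rw [Finset.sum_const, smul_eq_mul, mul_one]
        _ ≤ ∑ u ∈ lvs.filter (fun u => 0 < L u), L u :=
            Finset.sum_le_sum (fun u hu => (mem_filter.mp hu).2)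
        _ ≤ ∑ v ∈ lvs, L v := Finset.sum_le_sum_of_subset (filter_subset _ _)
    -- put everything together
    have hstemsum : ∑ w ∈ stems, ((Aset w).card + (X.filter (fun v => R v w)).card)
        ≤ ∑ w ∈ stems, L w := Finset.sum_le_sum hperstem
    rw [hsplitg, hsplitL]
    have hXsum : ∑ v ∈ X, (L v + (recvF G S L v).card)
        = ∑ v ∈ X, L v + ∑ w ∈ stems, (X.filter (fun v => R v w)).card := by
      rw [Finset.sum_add_distrib, hswap]
    rw [hXsum]
    rw [Finset.sum_add_distrib] at hstemsum
    omega

open Classical in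
lemma lower_bound_count {K : ℕ} (hK : S ⊆ (run G S L K).1) :
    pruneStepCount G S + ∑ v ∈ S \ pruneRemoved G S, layoutB G S L v
      ≤ ∑ v ∈ S, L v := by
  have hsum : ∑ v ∈ S \ pruneRemoved G S, layoutB G S L v
      = ∑ v ∈ S, (if v ∈ S \ pruneRemoved G S then L v + (recvF G S L v).card else 0) := by
    calc ∑ v ∈ S \ pruneRemoved G S, layoutB G S L v
        = ∑ v ∈ S \ pruneRemoved G S,
            (if v ∈ S \ pruneRemoved G S then L v + (recvF G S L v).card else 0) :=
          Finset.sum_congr rfl (fun v _ => by rw [layoutB])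
      _ = _ := Finset.sum_subset (Finset.sdiff_subset : S \ pruneRemoved G S ⊆ S)
          (fun x _ hxn => if_neg hxn)
  rw [hsum, ← sum_compV G S L, ← sum_compV G S
    (fun v => if v ∈ S \ pruneRemoved G S then L v + (recvF G S L v).card else 0),
    pruneStepCount_eq, ← Finset.sum_add_distrib]
  exact Finset.sum_le_sum (fun c _ => per_component_count G S L hK c)

end LowerBound


open Classical in
lemma dedSet_nonempty :
    {n | ∃ L : V → ℕ, (∀ v ∉ S, L v = 0) ∧ (∑ v ∈ S, L v) = n ∧ RelSucc G S L}.Nonempty := by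
  refine ⟨∑ v ∈ S, (fun v => if v ∈ S then 1 else 0 : V → ℕ) v,
    (fun v => if v ∈ S then 1 else 0), fun v hv => if_neg hv, rfl, 0, ?_⟩
  intro v hv
  rw [run_zero]
  exact mem_init_fst.mpr ⟨hv, by simp [hv]⟩

open Classical in
lemma relDed_le {L : V → ℕ} (hsupp : ∀ v ∉ S, L v = 0) (hsucc : RelSucc G S L) :
    relDed G S ≤ ∑ v ∈ S, L v :=
  Nat.sInf_le ⟨L, hsupp, rfl, hsucc⟩

open Classical in
lemma relDed_spec :
    ∃ L : V → ℕ, (∀ v ∉ S, L v = 0) ∧ (∑ v ∈ S, L v) = relDed G S ∧ RelSucc G S L :=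
  Nat.sInf_mem (dedSet_nonempty G S)

open Classical in
lemma relDed_empty : relDed G (∅ : Finset V) = 0 := by
  rw [relDed, Nat.sInf_eq_zero]
  exact Or.inl ⟨(fun _ => 0), fun v _ => rfl, by simp, 0, by simp⟩

open Classical in
lemma relDed_step :
    relDed G S = pruneStepCount G S + relDed G (S \ pruneRemoved G S) := by
  apply le_antisymm
  · obtain ⟨L0, hsupp0, hsum0, hsucc0⟩ := relDed_spec G (S \ pruneRemoved G S)
    calc relDed G S ≤ ∑ v ∈ S, layoutA G S L0 v :=
          relDed_le G S (fun v hv => by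
            simp only [layoutA]
            rw [hsupp0 v (fun h => hv (Finset.mem_sdiff.mp h).1),
              if_neg (fun h => hv (placed_subset G S h))])
            (upper_bound_succ G S L0 hsupp0 hsucc0)
      _ = pruneStepCount G S + ∑ v ∈ S \ pruneRemoved G S, L0 v :=
          sum_layoutA G S L0 hsupp0
      _ = pruneStepCount G S + relDed G (S \ pruneRemoved G S) := by rw [hsum0]
  · refine le_csInf (dedSet_nonempty G S) ?_
    rintro n ⟨L, hsupp, rfl, k, hk⟩
    calc pruneStepCount G S + relDed G (S \ pruneRemoved G S)
        ≤ pruneStepCount G S + ∑ v ∈ S \ pruneRemoved G S, layoutB G S L v :=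
          Nat.add_le_add_left (relDed_le G _ (layoutB_support G S L)
            (lower_bound_succ G S L hk)) _
      _ ≤ ∑ v ∈ S, L v := lower_bound_count G S L hk

section Termination

open SimpleGraph

open Classical in
lemma induce_acyclic (hac : G.IsAcyclic) : (G.induce (S : Set V)).IsAcyclic := by
  intro v c hc
  have hinj : Function.Injective (SimpleGraph.Embedding.induce (S : Set V) (G := G)) :=
    (SimpleGraph.Embedding.induce (S : Set V) (G := G)).injective
  exact hac (c.map (SimpleGraph.Embedding.induce (S : Set V)).toHom)
    ((SimpleGraph.Walk.map_isCycle_iff_of_injective hinj).mpr hc)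

open Classical in
lemma exists_degS_le_one (hac : G.IsAcyclic) (hS : S.Nonempty) :
    ∃ v ∈ S, degS G S v ≤ 1 := by
  letI : DecidableRel (G.induce (S : Set V)).Adj := Classical.decRel _
  obtain ⟨x, hx⟩ := hS
  have hne : Nonempty ↥(S : Set V) := ⟨⟨x, by exact_mod_cast hx⟩⟩
  obtain ⟨v, hv⟩ := exists_leaf_of_acyclic (G.induce (S : Set V)) (induce_acyclic G S hac) hne
  refine ⟨v.val, by exact_mod_cast v.2, ?_⟩
  have h1 : {u | (G.induce (S : Set V)).Adj v u}.ncard = degS G S v.val :=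
    ncard_supp_nbr G S v
  have h2 : {u | (G.induce (S : Set V)).Adj v u}.ncard
      = (G.induce (S : Set V)).degree v := by
    rw [show {u | (G.induce (S : Set V)).Adj v u}
        = (G.induce (S : Set V)).neighborSet v from rfl]
    rw [← Nat.card_coe_set_eq, Nat.card_eq_fintype_card]
    exact SimpleGraph.card_neighborSet_eq_degree _ _
  omega

open Classical in
lemma sdiff_card_lt (hac : G.IsAcyclic) (hS : S.Nonempty) :
    (S \ pruneRemoved G S).card < S.card := by
  obtain ⟨v, hvS, hvdeg⟩ := exists_degS_le_one G S hac hS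
  apply Finset.card_lt_card
  rw [Finset.ssubset_iff_of_subset Finset.sdiff_subset]
  refine ⟨v, hvS, ?_⟩
  intro hv
  exact (Finset.mem_sdiff.mp hv).2 ((mem_pruneRemoved G S).mpr ⟨hvS, Or.inl hvdeg⟩)

end Termination

end Struct

section Main

variable {V : Type*} [Fintype V] [DecidableEq V] (G : SimpleGraph V)
set_option linter.unusedSectionVars false

open Classical in
lemma main_induction (hac : G.IsAcyclic) :
    ∀ (fuel : ℕ) (S : Finset V), S.card ≤ fuel → relDed G S = pruneRun G fuel S := by
  intro fuel
  induction fuel with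
  | zero =>
    intro S hS
    have : S = ∅ := Finset.card_eq_zero.mp (Nat.le_zero.mp hS)
    subst this
    rw [relDed_empty, pruneRun]
  | succ n ih =>
    intro S hS
    by_cases hSe : S = ∅
    · subst hSe
      rw [relDed_empty, pruneRun, if_pos rfl]
    · rw [pruneRun, if_neg hSe, relDed_step G S]
      congr 1
      refine ih _ ?_
      have := sdiff_card_lt G S hac (Finset.nonempty_of_ne_empty hSe)
      omega

lemma dedStep_eq [DecidableRel G.Adj] (L : V → ℕ) (s : Finset V × Finset V) :
    dedStep G L s = relStep G Finset.univ L s := by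
  have hnbr : ∀ v, nbrS G Finset.univ s.1 v
      = Finset.univ.filter (fun u => G.Adj v u ∧ u ∉ s.1) := by
    intro v
    ext u
    rw [mem_nbrS]
    simp
  have hcard : ∀ v, (nbrS G Finset.univ s.1 v).card
      = (Finset.univ.filter (fun u => G.Adj v u ∧ u ∉ s.1)).card := fun v => by rw [hnbr]
  refine Prod.ext ?_ ?_
  · show s.1 ∪ _ = (relStep G Finset.univ L s).1
    rw [fst_relStep]
    ext u
    simp only [Finset.mem_union, Finset.mem_biUnion, Finset.mem_filter, Finset.mem_univ,
      true_and, mem_nbrS, hcard]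
  · show s.2 ∪ _ = (relStep G Finset.univ L s).2
    rw [snd_relStep]
    ext u
    simp only [Finset.mem_union, Finset.mem_filter, Finset.mem_univ, true_and, hcard]

lemma dedSucc_iff [DecidableRel G.Adj] (L : V → ℕ) :
    DedSuccessful G L ↔ RelSucc G Finset.univ L := by
  have hinit : (Finset.univ.filter (fun v => 0 < L v), (∅ : Finset V))
      = initSt Finset.univ L := by
    rw [initSt]
  have hfun : dedStep G L = relStep G Finset.univ L := funext (dedStep_eq G L)
  have hiter : ∀ k, (dedStep G L)^[k] (Finset.univ.filter (fun v => 0 < L v), ∅)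
      = run G Finset.univ L k := by
    intro k
    rw [hinit, hfun, run]
  constructor
  · rintro ⟨k, hk⟩
    exact ⟨k, by rw [← hiter k, hk]⟩
  · rintro ⟨k, hk⟩
    refine ⟨k, ?_⟩
    rw [hiter k]
    exact Finset.eq_univ_iff_forall.mpr (fun v => hk (Finset.mem_univ v))

lemma deductionNumber_eq_relDed : deductionNumber G = relDed G Finset.univ := by
  have hRS : ∀ (i1 i2 : DecidableEq V) (L : V → ℕ),
      @RelSucc V i1 G Finset.univ L ↔ @RelSucc V i2 G Finset.univ L := by
    intro i1 i2 L
    rw [Subsingleton.elim i1 i2]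
  unfold deductionNumber relDed
  congr 1
  ext n
  simp only [Set.mem_setOf_eq]
  constructor
  · rintro ⟨L, hsum, hsucc⟩
    refine ⟨L, fun v hv => absurd (Finset.mem_univ v) hv, hsum, ?_⟩
    exact (hRS _ _ L).mp
      ((@dedSucc_iff V _ (Classical.decEq V) G (Classical.decRel G.Adj) L).mp hsucc)
  · rintro ⟨L, _, hsum, hsucc⟩
    exact ⟨L, hsum,
      (@dedSucc_iff V _ (Classical.decEq V) G (Classical.decRel G.Adj) L).mpr
        ((hRS _ _ L).mpr hsucc)⟩

theorem pruning_eq_deduction' (hT : G.IsTree) : pruningNumber G = deductionNumber G := by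
  rw [pruningNumber, deductionNumber_eq_relDed,
    ← main_induction G hT.IsAcyclic (Fintype.card V) Finset.univ (le_of_eq Finset.card_univ)]

end Main

end DedGame

theorem pruning_eq_deduction {V : Type*} [Fintype V] [DecidableEq V] (G : SimpleGraph V)
    (hT : G.IsTree) : pruningNumber G = deductionNumber G := by
  exact DedGame.pruning_eq_deduction' G hT
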